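/- Let k^{a₁…a_ℓ} be a Killing ℓ-tensor on ℝ^n that is trace-free, i.e. g_{a₁a₂} k^{a₁a₂a₃…a_ℓ} = 0. Then the ℓ-th order differential operator D defined on smooth functions f : ℝ^n → ℝ by D f = k^{a₁…a_ℓ} ∂_{a₁}⋯∂_{a_ℓ} f commutes with the Laplace operator: Δ∘D = D∘Δ on smooth functions. -/

import Mathlib

noncomputable section

/-- Partial derivative `∂_a f` in the `a`-th coordinate direction on `ℝⁿ`. -/
def pd {n : ℕ} (a : Fin n) (f : (Fin n → ℝ) → ℝ) : (Fin n → ℝ) → ℝ :=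
  fun x => fderiv ℝ f x (Pi.single a 1)

/-- Raised partial derivative `∂^a f = g^{ab} ∂_b f`. -/
def pdUp {n : ℕ} (ginv : Matrix (Fin n) (Fin n) ℝ) (a : Fin n)
    (f : (Fin n → ℝ) → ℝ) : (Fin n → ℝ) → ℝ :=
  fun x => ∑ b, ginv a b * pd b f x

/-- Laplace operator `Δ f = g^{ab} ∂_a ∂_b f`. -/
def lap {n : ℕ} (ginv : Matrix (Fin n) (Fin n) ℝ) (f : (Fin n → ℝ) → ℝ) :
    (Fin n → ℝ) → ℝ :=
  fun x => ∑ a, ∑ b, ginv a b * pd a (pd b f) x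

/-- Iterated partial derivative `∂_{i 0} ⋯ ∂_{i (m-1)} f` along a tuple of indices. -/
def pdIter {n : ℕ} : (m : ℕ) → (Fin m → Fin n) → ((Fin n → ℝ) → ℝ) → ((Fin n → ℝ) → ℝ)
  | 0, _, f => f
  | m + 1, i, f => pd (i 0) (pdIter m (fun j => i j.succ) f)

/-- A (smooth, totally symmetric) Killing `ℓ`-tensor: `∂^{(a₀} k^{a₁…a_ℓ)} = 0`. -/
def IsKillingTensor {n : ℕ} (ginv : Matrix (Fin n) (Fin n) ℝ) (ℓ : ℕ)
    (k : (Fin ℓ → Fin n) → (Fin n → ℝ) → ℝ) : Prop :=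
  (∀ i, ContDiff ℝ (⊤ : ℕ∞) (k i)) ∧
  (∀ (σ : Equiv.Perm (Fin ℓ)) (i : Fin ℓ → Fin n), k (i ∘ σ) = k i) ∧
  (∀ (i : Fin (ℓ + 1) → Fin n) (x : Fin n → ℝ),
    ∑ σ : Equiv.Perm (Fin (ℓ + 1)),
      pdUp ginv (i (σ 0)) (k (fun j => i (σ j.succ))) x = 0)

end

/-! ### Auxiliary lemmas -/

section Aux
variable {n : ℕ}

lemma wt1 : (1 : WithTop ℕ∞) ≤ ((⊤:ℕ∞) : WithTop ℕ∞) := by exact_mod_cast le_top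
lemma wt2 : (2 : WithTop ℕ∞) ≤ ((⊤:ℕ∞) : WithTop ℕ∞) := by
  have : ((2:ℕ∞) : WithTop ℕ∞) ≤ ((⊤:ℕ∞) : WithTop ℕ∞) := by exact_mod_cast le_top
  simpa using this
lemma wtp1 : ((⊤:ℕ∞) : WithTop ℕ∞) + 1 ≤ ((⊤:ℕ∞) : WithTop ℕ∞) := by simp

abbrev SM {n : ℕ} (f : (Fin n → ℝ) → ℝ) : Prop := ContDiff ℝ (⊤ : ℕ∞) f

lemma SM.dAt {f : (Fin n → ℝ) → ℝ} (hf : SM f) (x : Fin n → ℝ) :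
    DifferentiableAt ℝ f x := (hf.differentiable (by simp)).differentiableAt

lemma pd_smooth {f : (Fin n → ℝ) → ℝ} (hf : SM f) (a : Fin n) : SM (pd a f) :=
  (hf.fderiv_right wtp1).clm_apply contDiff_const

lemma pd_sum {β : Type*} (s : Finset β) (F : β → (Fin n → ℝ) → ℝ) (a : Fin n)
    (x : Fin n → ℝ) (hF : ∀ j ∈ s, DifferentiableAt ℝ (F j) x) :
    pd a (fun y => ∑ j ∈ s, F j y) x = ∑ j ∈ s, pd a (F j) x := by
  unfold pd
  rw [fderiv_fun_sum hF]
  simp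

lemma pd_add {F G : (Fin n → ℝ) → ℝ} (a : Fin n) (x : Fin n → ℝ)
    (hF : DifferentiableAt ℝ F x) (hG : DifferentiableAt ℝ G x) :
    pd a (fun y => F y + G y) x = pd a F x + pd a G x := by
  unfold pd
  rw [fderiv_fun_add hF hG]
  simp

lemma pd_mul {F G : (Fin n → ℝ) → ℝ} (a : Fin n) (x : Fin n → ℝ)
    (hF : DifferentiableAt ℝ F x) (hG : DifferentiableAt ℝ G x) :
    pd a (fun y => F y * G y) x = pd a F x * G x + F x * pd a G x := by
  unfold pd
  rw [fderiv_fun_mul hF hG]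
  simp [smul_eq_mul]
  ring

lemma pd_const_mul {F : (Fin n → ℝ) → ℝ} (c : ℝ) (a : Fin n) (x : Fin n → ℝ)
    (hF : DifferentiableAt ℝ F x) :
    pd a (fun y => c * F y) x = c * pd a F x := by
  unfold pd
  rw [fderiv_const_mul hF]
  simp

lemma pd_zero (a : Fin n) : pd a (fun _ => (0:ℝ)) = fun _ => 0 := by
  funext x; unfold pd; simp

lemma pd_comm {f : (Fin n → ℝ) → ℝ} (hf : SM f) (a b : Fin n) :
    pd a (pd b f) = pd b (pd a f) := by
  funext x
  have hsymm : IsSymmSndFDerivAt ℝ f x :=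
    hf.contDiffAt.isSymmSndFDerivAt (by rw [minSmoothness_of_isRCLikeNormedField]; exact wt2)
  have hd : DifferentiableAt ℝ (fderiv ℝ f) x :=
    ((hf.fderiv_right wtp1).differentiable (by simp)).differentiableAt
  have e : ∀ v w : Fin n → ℝ,
      fderiv ℝ (fun y => fderiv ℝ f y w) x v = fderiv ℝ (fderiv ℝ f) x v w := by
    intro v w
    rw [fderiv_clm_apply hd (differentiableAt_const w)]
    simp
  show fderiv ℝ (fun y => fderiv ℝ f y (Pi.single b 1)) x (Pi.single a 1) = _
  rw [e, hsymm]
  exact (e _ _).symm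

lemma pdUp_smooth {ginv : Matrix (Fin n) (Fin n) ℝ} {h : (Fin n → ℝ) → ℝ}
    (hh : SM h) (a : Fin n) : SM (pdUp ginv a h) := by
  unfold pdUp
  exact ContDiff.sum fun b _ => contDiff_const.mul (pd_smooth hh b)

lemma pd_pdUp {ginv : Matrix (Fin n) (Fin n) ℝ} {h : (Fin n → ℝ) → ℝ}
    (hh : SM h) (c a : Fin n) (x : Fin n → ℝ) :
    pd c (pdUp ginv a h) x = ∑ e, ginv a e * pd c (pd e h) x := by
  unfold pdUp
  rw [pd_sum _ _ _ _ (fun e _ => SM.dAt (contDiff_const.mul (pd_smooth hh e)) x)]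
  exact Finset.sum_congr rfl fun e _ => pd_const_mul _ _ _ (SM.dAt (pd_smooth hh e) x)

lemma pdIter_smooth {f : (Fin n → ℝ) → ℝ} (hf : SM f) :
    ∀ (M : ℕ) (i : Fin M → Fin n), SM (pdIter M i f) := by
  intro M
  induction M with
  | zero => intro i; exact hf
  | succ M ih => intro i; exact pd_smooth (ih _) _

lemma pdIter_cons {f : (Fin n → ℝ) → ℝ} (M : ℕ) (a : Fin n) (i : Fin M → Fin n) :
    pdIter (M+1) (Fin.cons a i) f = pd a (pdIter M i f) := by
  simp only [pdIter, Fin.cons_zero, Fin.cons_succ]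

lemma pd_pdIter_comm {f : (Fin n → ℝ) → ℝ} (hf : SM f) :
    ∀ (M : ℕ) (i : Fin M → Fin n) (a : Fin n),
      pdIter M i (pd a f) = pd a (pdIter M i f) := by
  intro M
  induction M with
  | zero => intro i a; rfl
  | succ M ih =>
    intro i a
    show pd (i 0) (pdIter M (fun j => i j.succ) (pd a f)) = _
    rw [ih, pd_comm (pdIter_smooth hf M _)]
    rfl

lemma pdIter_sum {β : Type*} (s : Finset β) (F : β → (Fin n → ℝ) → ℝ)
    (hF : ∀ j ∈ s, SM (F j)) :
    ∀ (M : ℕ) (i : Fin M → Fin n),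
      pdIter M i (fun y => ∑ j ∈ s, F j y) = fun y => ∑ j ∈ s, pdIter M i (F j) y := by
  intro M
  induction M with
  | zero => intro i; rfl
  | succ M ih =>
    intro i
    show pd (i 0) (pdIter M (fun j => i j.succ) _) = _
    rw [ih]
    funext y
    show pd (i 0) _ y = _
    rw [pd_sum s _ _ _ (fun j hj => (pdIter_smooth (hF j hj) M _).dAt y)]
    rfl

lemma pdIter_const_mul {F : (Fin n → ℝ) → ℝ} (c : ℝ) (hF : SM F) :
    ∀ (M : ℕ) (i : Fin M → Fin n),
      pdIter M i (fun y => c * F y) = fun y => c * pdIter M i F y := by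
  intro M
  induction M with
  | zero => intro i; rfl
  | succ M ih =>
    intro i
    show pd (i 0) (pdIter M (fun j => i j.succ) _) = _
    rw [ih]
    funext y
    show pd (i 0) _ y = _
    rw [pd_const_mul c _ _ ((pdIter_smooth hF M _).dAt y)]
    rfl

lemma insertNth_succ' {β : Type*} {M : ℕ} (p : Fin (M+1)) (a : β) (i : Fin (M+1) → β) :
    Fin.insertNth (α := fun _ => β) p.succ a i
      = Fin.cons (i 0) (Fin.insertNth (α := fun _ => β) p a (fun j => i j.succ)) := by
  funext j
  refine Fin.cases ?_ (fun t => ?_) j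
  · have h0 : (0 : Fin (M+1+1)) = p.succ.succAbove 0 := (Fin.succ_succAbove_zero p).symm
    conv_lhs => rw [h0]
    rw [Fin.insertNth_apply_succAbove]
    simp
  · rw [Fin.cons_succ]
    refine p.succAboveCases ?_ (fun u => ?_) t
    · rw [Fin.insertNth_apply_same, Fin.insertNth_apply_same]
    · rw [← Fin.succ_succAbove_succ, Fin.insertNth_apply_succAbove,
        Fin.insertNth_apply_succAbove]

lemma pdIter_insertNth {f : (Fin n → ℝ) → ℝ} (hf : SM f) :
    ∀ (M : ℕ) (p : Fin (M+1)) (a : Fin n) (i : Fin M → Fin n),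
      pdIter (M+1) (p.insertNth a i) f = pd a (pdIter M i f) := by
  intro M
  induction M with
  | zero =>
    intro p a i
    have : p = 0 := Fin.fin_one_eq_zero p
    subst this
    rw [Fin.insertNth_zero', pdIter_cons]
  | succ M ih =>
    intro p a i
    refine Fin.cases ?_ (fun q => ?_) p
    · rw [Fin.insertNth_zero', pdIter_cons]
    · rw [insertNth_succ', pdIter_cons, ih q a (fun j => i j.succ),
        pd_comm (pdIter_smooth hf M _)]
      conv_rhs => rw [← Fin.cons_self_tail i, pdIter_cons]
      rfl

/-- The permutation `ρ_p` with `p.succAbove (ρ_p t) = swap 0 p t.succ`. -/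
def rho {M : ℕ} (p : Fin (M+1)) : Equiv.Perm (Fin M) :=
  Fin.cases (Equiv.refl (Fin M)) (fun u => u.cycleRange) p

lemma rho_spec {M : ℕ} (p : Fin (M+1)) (t : Fin M) :
    p.succAbove (rho p t) = Equiv.swap 0 p t.succ := by
  refine Fin.cases ?_ (fun u => ?_) p
  · simp [rho, Equiv.swap_self]
  · simp [rho, Fin.succAbove_cycleRange]

/-- The Killing equation, reduced to a sum over `ℓ+1` positions. -/
lemma killing_reduced {ℓ : ℕ} {ginv : Matrix (Fin n) (Fin n) ℝ}
    {k : (Fin ℓ → Fin n) → (Fin n → ℝ) → ℝ} (hk : IsKillingTensor ginv ℓ k) :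
    ∀ (I : Fin (ℓ+1) → Fin n) (x : Fin n → ℝ),
      ∑ p : Fin (ℓ+1), pdUp ginv (I p) (k (fun j => I (p.succAbove j))) x = 0 := by
  intro I x
  obtain ⟨hsm, hsym, hkill⟩ := hk
  have h := hkill I x
  rw [← Equiv.sum_comp (Equiv.Perm.decomposeFin.symm)
    (fun σ => pdUp ginv (I (σ 0)) (k (fun j => I (σ j.succ))) x)] at h
  rw [Fintype.sum_prod_type] at h
  have hterm : ∀ (p : Fin (ℓ+1)) (e : Equiv.Perm (Fin ℓ)),
      pdUp ginv (I (Equiv.Perm.decomposeFin.symm (p,e) 0))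
        (k (fun j => I (Equiv.Perm.decomposeFin.symm (p,e) j.succ))) x
        = pdUp ginv (I p) (k (fun j => I (p.succAbove j))) x := by
    intro p e
    rw [Equiv.Perm.decomposeFin_symm_apply_zero]
    congr 1
    have heq : (fun j => I (Equiv.Perm.decomposeFin.symm (p,e) j.succ))
        = (fun j => I (p.succAbove j)) ∘ (e.trans (rho p)) := by
      funext j
      simp only [Function.comp_apply, Equiv.trans_apply]
      rw [Equiv.Perm.decomposeFin_symm_apply_succ, ← rho_spec p (e j)]
    rw [heq, hsym]
  simp only [hterm, Finset.sum_const, nsmul_eq_mul] at h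
  rw [← Finset.mul_sum] at h
  rcases mul_eq_zero.1 h with h' | h'
  · exact absurd h' (by positivity)
  · exact h'

lemma comp_cons_succAbove_zero {L : ℕ} (r : Fin n) (i : Fin L → Fin n) :
    (fun j => (Fin.cons (α := fun _ => Fin n) r i) ((0 : Fin (L+1)).succAbove j)) = i := by
  funext j; simp

lemma comp_cons_succAbove_succ {L : ℕ} (r : Fin n) (i : Fin (L+1) → Fin n) (q : Fin (L+1)) :
    (fun j => (Fin.cons (α := fun _ => Fin n) r i) ((q.succ).succAbove j))
      = Fin.cons r (fun t => i (q.succAbove t)) := by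
  funext j
  refine Fin.cases ?_ (fun t => ?_) j
  · rw [Fin.succ_succAbove_zero]; simp
  · rw [Fin.succ_succAbove_succ]; simp

/-- Generic metric contraction. -/
lemma gcontract (A B : Fin n → Fin n → ℝ)
    (hc : ∀ s b, ∑ r, A r s * B r b = if s = b then 1 else 0) (F : Fin n → Fin n → ℝ) :
    ∑ r, ∑ s, A r s * ∑ b, B r b * F s b = ∑ s, F s s := by
  have h1 : ∀ r s, A r s * ∑ b, B r b * F s b = ∑ b, A r s * B r b * F s b := by
    intro r s
    rw [Finset.mul_sum]
    exact Finset.sum_congr rfl fun b _ => (mul_assoc _ _ _).symm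
  simp only [h1]
  rw [Finset.sum_comm]
  refine Finset.sum_congr rfl fun s _ => ?_
  rw [Finset.sum_comm]
  calc ∑ b, ∑ r, A r s * B r b * F s b
      = ∑ b, (∑ r, A r s * B r b) * F s b := by
        refine Finset.sum_congr rfl fun b _ => ?_
        rw [Finset.sum_mul]
    _ = ∑ b, (if s = b then 1 else 0) * F s b := by simp only [hc]
    _ = F s s := by simp

end Aux

section Sums
variable {α β γ : Type*} [Fintype α] [Fintype β] [Fintype γ]

lemma sum_rotate (F : α → β → γ → ℝ) :
    ∑ a, ∑ b, ∑ c, F a b c = ∑ c, ∑ a, ∑ b, F a b c := by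
  calc ∑ a, ∑ b, ∑ c, F a b c
      = ∑ a, ∑ c, ∑ b, F a b c := Finset.sum_congr rfl fun a _ => Finset.sum_comm
    _ = ∑ c, ∑ a, ∑ b, F a b c := Finset.sum_comm

lemma sum_pull_t (G : α → β → ℝ) (W : γ → α → β → ℝ) :
    ∑ r, ∑ s, G r s * ∑ t, W t r s = ∑ t, ∑ r, ∑ s, G r s * W t r s := by
  calc ∑ r, ∑ s, G r s * ∑ t, W t r s
      = ∑ r, ∑ s, ∑ t, G r s * W t r s :=
        Finset.sum_congr rfl fun r _ => Finset.sum_congr rfl fun s _ => by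
          rw [Finset.mul_sum]
    _ = ∑ t, ∑ r, ∑ s, G r s * W t r s := sum_rotate _

lemma double_contract_zero (G : α → β → ℝ) (c : γ → ℝ) (Q : γ → α → β → ℝ)
    (h0 : ∀ e, ∑ r, ∑ s, G r s * Q e r s = 0) :
    ∑ r, ∑ s, G r s * ∑ e, c e * Q e r s = 0 := by
  calc ∑ r, ∑ s, G r s * ∑ e, c e * Q e r s
      = ∑ r, ∑ s, ∑ e, c e * (G r s * Q e r s) := by
        refine Finset.sum_congr rfl fun r _ => Finset.sum_congr rfl fun s _ => ?_
        rw [Finset.mul_sum]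
        exact Finset.sum_congr rfl fun e _ => by ring
    _ = ∑ e, ∑ r, ∑ s, c e * (G r s * Q e r s) := sum_rotate _
    _ = ∑ e, c e * ∑ r, ∑ s, G r s * Q e r s := by
        refine Finset.sum_congr rfl fun e _ => ?_
        rw [Finset.mul_sum]
        exact Finset.sum_congr rfl fun r _ => by rw [Finset.mul_sum]
    _ = 0 := Finset.sum_eq_zero fun e _ => by rw [h0 e, mul_zero]

end Sums

section Tensor
open Matrix
variable {n m : ℕ} {g ginv : Matrix (Fin n) (Fin n) ℝ}
  {k : (Fin (m + 2) → Fin n) → (Fin n → ℝ) → ℝ}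

lemma hc_left (hgsym : g.IsSymm) (hginv : g * ginv = 1) :
    ∀ s b, ∑ r, g r s * ginv r b = if s = b then 1 else 0 := by
  intro s b
  have h1 : ∀ r, g r s = g s r := fun r =>
    (Matrix.transpose_apply g s r).symm.trans (congrFun (congrFun hgsym s) r)
  simp only [h1]
  rw [← Matrix.mul_apply, hginv, Matrix.one_apply]

lemma hc_right (hginv : g * ginv = 1) :
    ∀ r b, ∑ s, g r s * ginv s b = if r = b then 1 else 0 := by
  intro r b
  rw [← Matrix.mul_apply, hginv, Matrix.one_apply]

lemma ginv_symm (hgsym : g.IsSymm) (hginv : g * ginv = 1) :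
    ∀ a b, ginv a b = ginv b a := by
  have h1 : ginvᵀ * g = 1 := by
    have hg : gᵀ = g := hgsym
    calc ginvᵀ * g = ginvᵀ * gᵀ := by rw [hg]
      _ = (g * ginv)ᵀ := by rw [Matrix.transpose_mul]
      _ = 1 := by rw [hginv, Matrix.transpose_one]
  have hT : ginvᵀ = ginv := by
    calc ginvᵀ = ginvᵀ * (g * ginv) := by rw [hginv, Matrix.mul_one]
      _ = (ginvᵀ * g) * ginv := by rw [Matrix.mul_assoc]
      _ = ginv := by rw [h1, Matrix.one_mul]
  intro a b
  calc ginv a b = ginvᵀ b a := (Matrix.transpose_apply ginv b a).symm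
    _ = ginv b a := by rw [hT]

lemma pd_gsum_zero (hsm : ∀ i, SM (k i))
    (htf : ∀ (rest : Fin m → Fin n) (x : Fin n → ℝ),
      ∑ r, ∑ s, g r s * k (Fin.cons r (Fin.cons s rest)) x = 0)
    (rest' : Fin m → Fin n) (e : Fin n) (x : Fin n → ℝ) :
    ∑ r, ∑ s, g r s * pd e (k (Fin.cons r (Fin.cons s rest'))) x = 0 := by
  have hsm2 : ∀ r : Fin n, SM (fun y => ∑ s, g r s * k (Fin.cons r (Fin.cons s rest')) y) :=
    fun r => ContDiff.sum fun s _ => contDiff_const.mul (hsm _)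
  calc ∑ r, ∑ s, g r s * pd e (k (Fin.cons r (Fin.cons s rest'))) x
      = ∑ r, pd e (fun y => ∑ s, g r s * k (Fin.cons r (Fin.cons s rest')) y) x := by
        refine Finset.sum_congr rfl fun r _ => ?_
        rw [pd_sum _ _ _ _ (fun s _ => SM.dAt (contDiff_const.mul (hsm _)) x)]
        exact Finset.sum_congr rfl fun s _ => (pd_const_mul _ _ _ (SM.dAt (hsm _) x)).symm
    _ = pd e (fun y => ∑ r, ∑ s, g r s * k (Fin.cons r (Fin.cons s rest')) y) x := by
        rw [pd_sum _ _ _ _ (fun r _ => SM.dAt (hsm2 r) x)]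
    _ = pd e (fun _ => 0) x := by
        congr 1
        funext y
        exact htf rest' y
    _ = 0 := congrFun (pd_zero e) x

lemma div_free (hgsym : g.IsSymm) (hginv : g * ginv = 1)
    (hk : IsKillingTensor ginv (m+2) k)
    (htf : ∀ (rest : Fin m → Fin n) (x : Fin n → ℝ),
      ∑ r, ∑ s, g r s * k (Fin.cons r (Fin.cons s rest)) x = 0) :
    ∀ (rest : Fin (m+1) → Fin n) (x : Fin n → ℝ),
      ∑ s, pd s (k (Fin.cons s rest)) x = 0 := by
  intro rest x
  have hsm := hk.1
  have KE := killing_reduced hk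
  have hmain : ∑ r, ∑ s, g r s * (∑ p : Fin (m+3),
      pdUp ginv ((Fin.cons r (Fin.cons s rest) : Fin (m+3) → Fin n) p)
        (k (fun j => (Fin.cons r (Fin.cons s rest) : Fin (m+3) → Fin n) (p.succAbove j))) x) = 0 :=
    Finset.sum_eq_zero fun r _ => Finset.sum_eq_zero fun s _ => by rw [KE _ x, mul_zero]
  have hexp : ∀ r s : Fin n, (∑ p : Fin (m+3),
      pdUp ginv ((Fin.cons r (Fin.cons s rest) : Fin (m+3) → Fin n) p)
        (k (fun j => (Fin.cons r (Fin.cons s rest) : Fin (m+3) → Fin n) (p.succAbove j))) x)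
      = pdUp ginv r (k (Fin.cons s rest)) x
        + (pdUp ginv s (k (Fin.cons r rest)) x
          + ∑ t : Fin (m+1), pdUp ginv (rest t)
              (k (Fin.cons r (Fin.cons s (fun v => rest (t.succAbove v))))) x) := by
    intro r s
    rw [Fin.sum_univ_succ, Fin.sum_univ_succ]
    simp only [Fin.cons_zero, Fin.cons_succ, comp_cons_succAbove_succ,
      comp_cons_succAbove_zero]
  simp only [hexp, mul_add, Finset.sum_add_distrib] at hmain
  have hA : ∑ r, ∑ s, g r s * pdUp ginv r (k (Fin.cons s rest)) x
      = ∑ s, pd s (k (Fin.cons s rest)) x := by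
    have := gcontract g ginv (hc_left hgsym hginv)
      (fun s b => pd b (k (Fin.cons s rest)) x)
    simpa only [pdUp] using this
  have hB : ∑ r, ∑ s, g r s * pdUp ginv s (k (Fin.cons r rest)) x
      = ∑ s, pd s (k (Fin.cons s rest)) x := by
    rw [Finset.sum_comm]
    have := gcontract (fun a b => g b a) (fun a b => ginv a b) (fun s b => hc_right hginv s b)
      (fun s b => pd b (k (Fin.cons s rest)) x)
    simpa only [pdUp] using this
  have hC : ∑ r, ∑ s, g r s * ∑ t : Fin (m+1), pdUp ginv (rest t)
      (k (Fin.cons r (Fin.cons s (fun v => rest (t.succAbove v))))) x = 0 := by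
    rw [sum_pull_t (fun r s => g r s) (fun t r s => pdUp ginv (rest t)
      (k (Fin.cons r (Fin.cons s (fun v => rest (t.succAbove v))))) x)]
    refine Finset.sum_eq_zero fun t _ => ?_
    simp only [pdUp]
    exact double_contract_zero g (fun e => ginv (rest t) e)
      (fun e r s => pd e (k (Fin.cons r (Fin.cons s (fun v => rest (t.succAbove v))))) x)
      (fun e => pd_gsum_zero hsm htf _ e x)
  rw [hA, hB, hC, add_zero] at hmain
  linarith

lemma kharmonic (hgsym : g.IsSymm) (hginv : g * ginv = 1)
    (hk : IsKillingTensor ginv (m+2) k)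
    (htf : ∀ (rest : Fin m → Fin n) (x : Fin n → ℝ),
      ∑ r, ∑ s, g r s * k (Fin.cons r (Fin.cons s rest)) x = 0) :
    ∀ (i : Fin (m+2) → Fin n) (x : Fin n → ℝ),
      ∑ c, ∑ e, ginv c e * pd c (pd e (k i)) x = 0 := by
  intro i x
  have hsm := hk.1
  have KE := killing_reduced hk
  have hdiv : ∀ rest : Fin (m+1) → Fin n,
      (fun y => ∑ s, pd s (k (Fin.cons s rest)) y) = (fun _ => (0:ℝ)) :=
    fun rest => funext fun y => div_free hgsym hginv hk htf rest y
  have hmain : ∑ c : Fin n, pd c (fun y => ∑ p : Fin (m+3),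
      pdUp ginv ((Fin.cons c i : Fin (m+3) → Fin n) p)
        (k (fun j => (Fin.cons c i : Fin (m+3) → Fin n) (p.succAbove j))) y) x = 0 := by
    refine Finset.sum_eq_zero fun c _ => ?_
    have h0 : (fun y => ∑ p : Fin (m+3),
        pdUp ginv ((Fin.cons c i : Fin (m+3) → Fin n) p)
          (k (fun j => (Fin.cons c i : Fin (m+3) → Fin n) (p.succAbove j))) y)
        = (fun _ => (0:ℝ)) := funext fun y => KE _ y
    rw [h0]
    exact congrFun (pd_zero c) x
  have hsum : ∀ c : Fin n, pd c (fun y => ∑ p : Fin (m+3),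
      pdUp ginv ((Fin.cons c i : Fin (m+3) → Fin n) p)
        (k (fun j => (Fin.cons c i : Fin (m+3) → Fin n) (p.succAbove j))) y) x
      = ∑ p : Fin (m+3), pd c (pdUp ginv ((Fin.cons c i : Fin (m+3) → Fin n) p)
          (k (fun j => (Fin.cons c i : Fin (m+3) → Fin n) (p.succAbove j)))) x :=
    fun c => pd_sum _ _ c x (fun p _ => SM.dAt (pdUp_smooth (hsm _) _) x)
  simp only [hsum] at hmain
  have hsplit : ∀ c : Fin n, ∑ p : Fin (m+3), pd c (pdUp ginv ((Fin.cons c i : Fin (m+3) → Fin n) p)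
      (k (fun j => (Fin.cons c i : Fin (m+3) → Fin n) (p.succAbove j)))) x
      = pd c (pdUp ginv c (k i)) x
        + ∑ q : Fin (m+2), pd c (pdUp ginv (i q)
            (k (Fin.cons c (fun t => i (q.succAbove t))))) x := by
    intro c
    rw [Fin.sum_univ_succ]
    simp only [Fin.cons_zero, Fin.cons_succ, comp_cons_succAbove_succ,
      comp_cons_succAbove_zero]
  simp only [hsplit, Finset.sum_add_distrib] at hmain
  have hfirst : ∑ c, pd c (pdUp ginv c (k i)) x
      = ∑ c, ∑ e, ginv c e * pd c (pd e (k i)) x :=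
    Finset.sum_congr rfl fun c _ => pd_pdUp (hsm i) c c x
  have hsecond : ∑ c : Fin n, ∑ q : Fin (m+2), pd c (pdUp ginv (i q)
      (k (Fin.cons c (fun t => i (q.succAbove t))))) x = 0 := by
    rw [Finset.sum_comm]
    refine Finset.sum_eq_zero fun q _ => ?_
    calc ∑ c, pd c (pdUp ginv (i q) (k (Fin.cons c (fun t => i (q.succAbove t))))) x
        = ∑ c, ∑ e, ginv (i q) e * pd c (pd e (k (Fin.cons c (fun t => i (q.succAbove t))))) x :=
          Finset.sum_congr rfl fun c _ => pd_pdUp (hsm _) c (i q) x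
      _ = ∑ e, ∑ c, ginv (i q) e * pd c (pd e (k (Fin.cons c (fun t => i (q.succAbove t))))) x :=
          Finset.sum_comm
      _ = ∑ e, ginv (i q) e * ∑ c, pd e (pd c (k (Fin.cons c (fun t => i (q.succAbove t))))) x := by
          refine Finset.sum_congr rfl fun e _ => ?_
          rw [Finset.mul_sum]
          refine Finset.sum_congr rfl fun c _ => ?_
          rw [pd_comm (hsm _) c e]
      _ = ∑ e, ginv (i q) e * pd e (fun y => ∑ c, pd c (k (Fin.cons c (fun t => i (q.succAbove t)))) y) x := by
          refine Finset.sum_congr rfl fun e _ => ?_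
          congr 1
          rw [pd_sum _ _ _ _ (fun c _ => SM.dAt (pd_smooth (hsm _) c) x)]
      _ = 0 := by
          refine Finset.sum_eq_zero fun e _ => ?_
          rw [hdiv (fun t => i (q.succAbove t))]
          rw [pd_zero e]
          simp
  rw [hfirst, hsecond, add_zero] at hmain
  exact hmain

lemma killing_contract (hk : IsKillingTensor ginv (m+2) k)
    {f : (Fin n → ℝ) → ℝ} (hf : SM f) (x : Fin n → ℝ) :
    ∑ i : Fin (m+2) → Fin n, ∑ a,
      pdUp ginv a (k i) x * pd a (pdIter (m+2) i f) x = 0 := by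
  have KE := killing_reduced hk
  have h : ∑ I : Fin (m+3) → Fin n, ∑ p : Fin (m+3),
      pdUp ginv (I p) (k (fun j => I (p.succAbove j))) x * pdIter (m+3) I f x = 0 := by
    refine Finset.sum_eq_zero fun I _ => ?_
    rw [← Finset.sum_mul, KE I x, zero_mul]
  rw [Finset.sum_comm] at h
  have hp : ∀ p : Fin (m+3), ∑ I : Fin (m+3) → Fin n,
      pdUp ginv (I p) (k (fun j => I (p.succAbove j))) x * pdIter (m+3) I f x
      = ∑ z : Fin n × (Fin (m+2) → Fin n),
          pdUp ginv z.1 (k z.2) x * pd z.1 (pdIter (m+2) z.2 f) x := by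
    intro p
    rw [← Equiv.sum_comp (Fin.insertNthEquiv (fun _ => Fin n) p)
      (fun I => pdUp ginv (I p) (k (fun j => I (p.succAbove j))) x * pdIter (m+3) I f x)]
    refine Finset.sum_congr rfl fun z _ => ?_
    obtain ⟨a, i⟩ := z
    have e1 : (Fin.insertNthEquiv (fun _ => Fin n) p) (a, i) = p.insertNth a i := rfl
    rw [e1, Fin.insertNth_apply_same]
    have e2 : (fun j => Fin.insertNth (α := fun _ => Fin n) p a i (p.succAbove j)) = i := by
      funext j
      simp
    rw [e2, pdIter_insertNth hf (m+2) p a i]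
  simp only [hp, Finset.sum_const, Finset.card_univ, Fintype.card_fin, nsmul_eq_mul] at h
  have hc : ((m+3 : ℕ) : ℝ) ≠ 0 := by positivity
  have hC := (mul_eq_zero.1 h).resolve_left hc
  rw [Fintype.sum_prod_type] at hC
  rw [Finset.sum_comm] at hC
  exact hC

end Tensor

section Main
variable {n : ℕ}

lemma pd_pd_mul {F G : (Fin n → ℝ) → ℝ} (hF : SM F) (hG : SM G) (a b : Fin n)
    (x : Fin n → ℝ) :
    pd a (pd b (fun y => F y * G y)) x
      = pd a (pd b F) x * G x + pd b F x * pd a G x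
        + pd a F x * pd b G x + F x * pd a (pd b G) x := by
  have h1 : pd b (fun y => F y * G y) = fun y => pd b F y * G y + F y * pd b G y :=
    funext fun y => pd_mul b y (SM.dAt hF y) (SM.dAt hG y)
  rw [h1, pd_add a x (SM.dAt ((pd_smooth hF b).mul hG) x) (SM.dAt (hF.mul (pd_smooth hG b)) x),
    pd_mul a x (SM.dAt (pd_smooth hF b) x) (SM.dAt hG x),
    pd_mul a x (SM.dAt hF x) (SM.dAt (pd_smooth hG b) x)]
  ring

end Main


/-- for a trace-free Killing `ℓ`-tensor `k` (valence `ℓ = m + 2`,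
`g_{a₁a₂} k^{a₁a₂a₃…a_ℓ} = 0`) on `ℝⁿ`, the operator
`D f = k^{a₁…a_ℓ} ∂_{a₁}⋯∂_{a_ℓ} f` commutes with the Laplacian. -/
theorem stmt11 {n m : ℕ} (hn : 0 < n)
    (g ginv : Matrix (Fin n) (Fin n) ℝ) (hgsym : g.IsSymm) (hginv : g * ginv = 1)
    (k : (Fin (m + 2) → Fin n) → (Fin n → ℝ) → ℝ)
    (hk : IsKillingTensor ginv (m + 2) k)
    (htf : ∀ (rest : Fin m → Fin n) (x : Fin n → ℝ),
      ∑ r, ∑ s, g r s * k (Fin.cons r (Fin.cons s rest)) x = 0)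
    (D : ((Fin n → ℝ) → ℝ) → ((Fin n → ℝ) → ℝ))
    (hD : ∀ f x, D f x = ∑ i : Fin (m + 2) → Fin n, k i x * pdIter (m + 2) i f x) :
    ∀ f, ContDiff ℝ (⊤ : ℕ∞) f → ∀ x, lap ginv (D f) x = D (lap ginv f) x := by
  intro f hf x
  have hsm : ∀ i, SM (k i) := hk.1
  have hP : ∀ i : Fin (m+2) → Fin n, SM (pdIter (m+2) i f) := fun i => pdIter_smooth hf _ i
  have hprod : ∀ i : Fin (m+2) → Fin n, SM (fun y => k i y * pdIter (m+2) i f y) :=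
    fun i => (hsm i).mul (hP i)
  have hDf : D f = fun y => ∑ i : Fin (m+2) → Fin n, k i y * pdIter (m+2) i f y :=
    funext fun y => hD f y
  have hstep : ∀ a b : Fin n, pd a (pd b (D f)) x
      = ∑ i : Fin (m+2) → Fin n, pd a (pd b (fun y => k i y * pdIter (m+2) i f y)) x := by
    intro a b
    rw [hDf]
    have h1 : pd b (fun y => ∑ i : Fin (m+2) → Fin n, k i y * pdIter (m+2) i f y)
        = fun y => ∑ i : Fin (m+2) → Fin n, pd b (fun z => k i z * pdIter (m+2) i f z) y :=
      funext fun y => pd_sum _ _ b y (fun i _ => SM.dAt (hprod i) y)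
    rw [h1, pd_sum _ _ a x (fun i _ => SM.dAt (pd_smooth (hprod i) b) x)]
  have hlapP : ∀ i : Fin (m+2) → Fin n, pdIter (m+2) i (lap ginv f)
      = fun y => ∑ a, ∑ b, ginv a b * pd a (pd b (pdIter (m+2) i f)) y := by
    intro i
    have e0 : lap ginv f = fun y => ∑ a, ∑ b, ginv a b * pd a (pd b f) y := rfl
    rw [e0, pdIter_sum _ (fun a y => ∑ b, ginv a b * pd a (pd b f) y)
      (fun a _ => ContDiff.sum fun b _ => contDiff_const.mul (pd_smooth (pd_smooth hf b) a))
      (m+2) i]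
    funext y
    refine Finset.sum_congr rfl fun a _ => ?_
    rw [pdIter_sum _ (fun b y => ginv a b * pd a (pd b f) y) (fun b _ => contDiff_const.mul (pd_smooth (pd_smooth hf b) a)) (m+2) i]
    refine Finset.sum_congr rfl fun b _ => ?_
    rw [pdIter_const_mul _ (pd_smooth (pd_smooth hf b) a) (m+2) i]
    rw [pd_pdIter_comm (pd_smooth hf b) (m+2) i a, pd_pdIter_comm hf (m+2) i b]
  have hT2 : ∑ a, ∑ b, ∑ i : Fin (m+2) → Fin n,
      ginv a b * (pd b (k i) x * pd a (pdIter (m+2) i f) x) = 0 := by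
    rw [sum_rotate]
    have := killing_contract hk hf x
    rw [← this]
    refine Finset.sum_congr rfl fun i _ => Finset.sum_congr rfl fun a _ => ?_
    show ∑ b, ginv a b * (pd b (k i) x * pd a (pdIter (m+2) i f) x)
      = pdUp ginv a (k i) x * pd a (pdIter (m+2) i f) x
    simp only [pdUp]
    rw [Finset.sum_mul]
    exact Finset.sum_congr rfl fun b _ => by ring
  calc lap ginv (D f) x
      = ∑ a, ∑ b, ginv a b * pd a (pd b (D f)) x := rfl
    _ = ∑ a, ∑ b, ∑ i : Fin (m+2) → Fin n, ginv a b
          * (pd a (pd b (k i)) x * pdIter (m+2) i f x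
            + pd b (k i) x * pd a (pdIter (m+2) i f) x
            + pd a (k i) x * pd b (pdIter (m+2) i f) x
            + k i x * pd a (pd b (pdIter (m+2) i f)) x) := by
        refine Finset.sum_congr rfl fun a _ => Finset.sum_congr rfl fun b _ => ?_
        rw [hstep a b, Finset.mul_sum]
        exact Finset.sum_congr rfl fun i _ => by
          rw [pd_pd_mul (hsm i) (hP i) a b x]
    _ = (∑ a, ∑ b, ∑ i : Fin (m+2) → Fin n,
            ginv a b * (pd a (pd b (k i)) x * pdIter (m+2) i f x))
        + (∑ a, ∑ b, ∑ i : Fin (m+2) → Fin n,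
            ginv a b * (pd b (k i) x * pd a (pdIter (m+2) i f) x))
        + (∑ a, ∑ b, ∑ i : Fin (m+2) → Fin n,
            ginv a b * (pd a (k i) x * pd b (pdIter (m+2) i f) x))
        + (∑ a, ∑ b, ∑ i : Fin (m+2) → Fin n,
            ginv a b * (k i x * pd a (pd b (pdIter (m+2) i f)) x)) := by
        simp only [mul_add, Finset.sum_add_distrib]
    _ = 0 + 0 + 0 + (∑ a, ∑ b, ∑ i : Fin (m+2) → Fin n,
            ginv a b * (k i x * pd a (pd b (pdIter (m+2) i f)) x)) := by
        have hT1 : ∑ a, ∑ b, ∑ i : Fin (m+2) → Fin n,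
            ginv a b * (pd a (pd b (k i)) x * pdIter (m+2) i f x) = 0 := by
          rw [sum_rotate]
          refine Finset.sum_eq_zero fun i _ => ?_
          have hh : ∑ a, ∑ b, ginv a b * (pd a (pd b (k i)) x * pdIter (m+2) i f x)
              = (∑ a, ∑ b, ginv a b * pd a (pd b (k i)) x) * pdIter (m+2) i f x := by
            rw [Finset.sum_mul]
            refine Finset.sum_congr rfl fun a _ => ?_
            rw [Finset.sum_mul]
            exact Finset.sum_congr rfl fun b _ => by ring
          rw [hh, kharmonic hgsym hginv hk htf i x, zero_mul]
        have hT3 : ∑ a, ∑ b, ∑ i : Fin (m+2) → Fin n,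
            ginv a b * (pd a (k i) x * pd b (pdIter (m+2) i f) x) = 0 := by
          rw [Finset.sum_comm, ← hT2]
          refine Finset.sum_congr rfl fun b _ => Finset.sum_congr rfl fun a _ =>
            Finset.sum_congr rfl fun i _ => ?_
          rw [ginv_symm hgsym hginv a b]
        rw [hT1, hT2, hT3]
    _ = D (lap ginv f) x := by
        rw [zero_add, zero_add, zero_add, hD (lap ginv f) x]
        rw [sum_rotate]
        refine Finset.sum_congr rfl fun i _ => ?_
        rw [hlapP i]
        rw [Finset.mul_sum]
        refine Finset.sum_congr rfl fun a _ => ?_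
        rw [Finset.mul_sum]
        exact Finset.sum_congr rfl fun b _ => by ring
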